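/- For a finite outcome set Y with values q(y) for y ∈ Y, adding independent Gumbel noise G_y ∼ Gum(b) to each q(y) and reporting the ordered sequence of the k outcomes with the largest noisy values yields the same distribution over ordered k-tuples as iteratively peeling with the Exponential Mechanism: sampling y₁ with probability proportional to exp(q(y)/b) over Y, then y₂ with probability proportional to exp(q(y)/b) over Y \ {y₁}, and so on for k rounds. -/

import Mathlib

open MeasureTheory

/-- Density of the Gumbel distribution `Gum(b)`. -/
noncomputable def gumPdf (b z : ℝ) : ℝ := (1 / b) * Real.exp (-(z / b + Real.exp (-(z / b))))

/-- The Gumbel distribution `Gum(b)` as a measure on `ℝ`. -/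
noncomputable def gumMeasure (b : ℝ) : Measure ℝ :=
  volume.withDensity fun z => ENNReal.ofReal (gumPdf b z)

open Set Real Filter
open scoped ENNReal

instance gumMeasure.sigmaFinite (b : ℝ) : SigmaFinite (gumMeasure b) :=
  SigmaFinite.withDensity_ofReal (gumPdf b)

/-- FTC computation: ∫_{Iio c} (K/b) e^{-s/b} e^{-K e^{-s/b}} ds = e^{-K e^{-c/b}}. -/
lemma keyInt (b K c : ℝ) (hb : 0 < b) (hK : 0 < K) :
    ∫⁻ s in Set.Iio c,
        ENNReal.ofReal (K / b * (Real.exp (-(s / b)) * Real.exp (-(K * Real.exp (-(s / b))))))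
      = ENNReal.ofReal (Real.exp (-(K * Real.exp (-(c / b))))) := by
  set f : ℝ → ℝ := fun s => K / b * (Real.exp (-(s / b)) * Real.exp (-(K * Real.exp (-(s / b)))))
  have hf_nonneg : ∀ s, 0 ≤ f s := fun s =>
    mul_nonneg (div_nonneg hK.le hb.le) (mul_nonneg (Real.exp_nonneg _) (Real.exp_nonneg _))
  -- the antiderivative on the negated axis
  set g : ℝ → ℝ := fun x => -Real.exp (-(K * Real.exp (x / b)))
  have hg : ∀ x, HasDerivAt g (f (-x)) x := by
    intro x
    have h1 : HasDerivAt (fun x : ℝ => x / b) (1 / b) x := (hasDerivAt_id x).div_const b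
    have h2 : HasDerivAt (fun x : ℝ => Real.exp (x / b)) (Real.exp (x / b) * (1 / b)) x :=
      (Real.hasDerivAt_exp _).comp x h1
    have h3 : HasDerivAt (fun x : ℝ => -(K * Real.exp (x / b)))
        (-(K * (Real.exp (x / b) * (1 / b)))) x := (h2.const_mul K).neg
    have h4 := (Real.hasDerivAt_exp _).comp x h3
    have h5 := h4.neg
    convert h5 using 1
    · rfl
    · rfl
    · rfl
    simp only [f, neg_div, neg_neg]
    ring
  have hg_tendsto : Tendsto g atTop (nhds 0) := by
    have h1 : Tendsto (fun x : ℝ => x / b) atTop atTop := tendsto_id.atTop_div_const hb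
    have h2 : Tendsto (fun x : ℝ => Real.exp (x / b)) atTop atTop :=
      Real.tendsto_exp_atTop.comp h1
    have h3 : Tendsto (fun x : ℝ => -(K * Real.exp (x / b))) atTop atBot :=
      tendsto_neg_atTop_atBot.comp (h2.const_mul_atTop hK)
    have h4 : Tendsto (fun x => Real.exp (-(K * Real.exp (x / b)))) atTop (nhds 0) :=
      Real.tendsto_exp_atBot.comp h3
    simpa [g] using h4.neg
  have hInt : ∫ x in Set.Ioi (-c), f (-x) = 0 - g (-c) :=
    integral_Ioi_of_hasDerivAt_of_nonneg' (fun x _ => hg x)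
      (fun x _ => hf_nonneg _) hg_tendsto
  have hIntegrable : IntegrableOn (fun x => f (-x)) (Set.Ioi (-c)) :=
    integrableOn_Ioi_deriv_of_nonneg' (fun x _ => hg x) (fun x _ => hf_nonneg _) hg_tendsto
  -- move to Iio via negation
  have hmap : (volume : Measure ℝ).restrict (Set.Ioi (-c))
      = Measure.map Neg.neg ((volume : Measure ℝ).restrict (Set.Iio c)) := by
    have hpre : Neg.neg ⁻¹' (Set.Ioi (-c)) = Set.Iio c := by ext x; simp [neg_lt]
    rw [← Measure.map_neg_eq_self (volume : Measure ℝ),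
      Measure.restrict_map measurable_neg measurableSet_Ioi, hpre,
      Measure.map_neg_eq_self (volume : Measure ℝ)]
  have hswap : ∫⁻ s in Set.Iio c, ENNReal.ofReal (f s)
      = ∫⁻ x in Set.Ioi (-c), ENNReal.ofReal (f (-x)) := by
    rw [hmap, lintegral_map (by fun_prop) measurable_neg]
    simp
  rw [hswap, ← ofReal_integral_eq_lintegral_ofReal hIntegrable
    (Filter.Eventually.of_forall fun x => hf_nonneg _), hInt]
  simp [g, neg_div]


lemma gumMeasure_Iio (b c : ℝ) (hb : 0 < b) :
    gumMeasure b (Set.Iio c) = ENNReal.ofReal (Real.exp (-(Real.exp (-(c / b))))) := by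
  rw [gumMeasure, withDensity_apply _ measurableSet_Iio]
  have : ∀ s : ℝ, gumPdf b s
      = 1 / b * (Real.exp (-(s / b)) * Real.exp (-(1 * Real.exp (-(s / b))))) := by
    intro s
    rw [gumPdf, one_mul, neg_add, Real.exp_add]
  calc ∫⁻ s in Set.Iio c, ENNReal.ofReal (gumPdf b s)
      = ∫⁻ s in Set.Iio c,
          ENNReal.ofReal (1 / b * (Real.exp (-(s / b)) * Real.exp (-(1 * Real.exp (-(s / b)))))) :=
        by exact lintegral_congr fun s => by rw [this s]
    _ = ENNReal.ofReal (Real.exp (-(1 * Real.exp (-(c / b))))) := keyInt b 1 c hb one_pos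
    _ = _ := by rw [one_mul]

lemma pi_box (b : ℝ) (hb : 0 < b) {ι : Type*} [Fintype ι] (c : ι → ℝ) :
    (Measure.pi fun _ : ι => gumMeasure b) {h : ι → ℝ | ∀ z, h z < c z}
      = ENNReal.ofReal (Real.exp (-(∑ z : ι, Real.exp (-(c z / b))))) := by
  have hset : {h : ι → ℝ | ∀ z, h z < c z} = Set.pi Set.univ (fun z => Set.Iio (c z)) := by
    ext h; simp [Set.mem_pi]
  rw [hset, Measure.pi_pi]
  have : ∀ z : ι, gumMeasure b (Set.Iio (c z))
      = ENNReal.ofReal (Real.exp (-(Real.exp (-(c z / b))))) := fun z => gumMeasure_Iio b _ hb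
  simp_rw [this]
  rw [← ENNReal.ofReal_prod_of_nonneg (fun z _ => (Real.exp_nonneg _)),
    ← Real.exp_sum, ← Finset.sum_neg_distrib]

lemma pi_split {Y : Type*} [Fintype Y] (b : ℝ) (p : Y → Prop) [DecidablePred p]
    {S : Set (Y → ℝ)} (hS : MeasurableSet S) :
    (Measure.pi fun _ : Y => gumMeasure b) S
      = ∫⁻ x : {z // p z} → ℝ,
          (Measure.pi fun _ : {z // ¬ p z} => gumMeasure b)
            {h : {z // ¬ p z} → ℝ | (fun z => if hz : p z then x ⟨z, hz⟩ else h ⟨z, hz⟩) ∈ S}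
        ∂(Measure.pi fun _ : {z // p z} => gumMeasure b) := by
  have hmp := measurePreserving_piEquivPiSubtypeProd (fun _ : Y => gumMeasure b) p
  set e := MeasurableEquiv.piEquivPiSubtypeProd (fun _ : Y => ℝ) p with he
  have hA : MeasurableSet (e.symm ⁻¹' S) := e.symm.measurable hS
  have h1 : S = e ⁻¹' (e.symm ⁻¹' S) := by
    ext g; simp
  rw [h1, hmp.measure_preimage hA.nullMeasurableSet, Measure.prod_apply hA]
  refine lintegral_congr fun x => ?_
  congr 1
  ext h
  have key : (fun z => if hz : p z then x ⟨z, hz⟩ else h ⟨z, hz⟩) = e.symm (x, h) := by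
    ext z
    rw [he]
    simp [MeasurableEquiv.piEquivPiSubtypeProd, Equiv.piEquivPiSubtypeProd_symm_apply]
  simp [key]

lemma pi_split_single {Y : Type*} [Fintype Y] [DecidableEq Y] (b : ℝ) (y0 : Y)
    {S : Set (Y → ℝ)} (hS : MeasurableSet S) :
    (Measure.pi fun _ : Y => gumMeasure b) S
      = ∫⁻ s : ℝ,
          (Measure.pi fun _ : {z : Y // ¬ z = y0} => gumMeasure b)
            {h : {z : Y // ¬ z = y0} → ℝ |
              (fun z => if hz : z = y0 then s else h ⟨z, hz⟩) ∈ S}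
        ∂(gumMeasure b) := by
  rw [pi_split b (fun z => z = y0) hS]
  haveI : Unique {z : Y // z = y0} := ⟨⟨⟨y0, rfl⟩⟩, fun a => Subtype.ext a.2⟩
  have key : ∀ (F : ({z : Y // z = y0} → ℝ) → ENNReal) (i : Fintype {z : Y // z = y0}),
      (∫⁻ x, F x ∂(@Measure.pi _ (fun _ => ℝ) i (fun _ => Real.measurableSpace)
          (fun _ => gumMeasure b)))
        = ∫⁻ s : ℝ, F (fun _ => s) ∂(gumMeasure b) := by
    intro F i
    obtain rfl : i = Unique.fintype := Subsingleton.elim _ _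
    conv_rhs => rw [← (measurePreserving_funUnique (gumMeasure b)
      {z : Y // z = y0}).map_eq, lintegral_map_equiv]
    exact lintegral_congr fun x => congrArg F (funext fun z =>
      show x z = x default from congrArg x (Subsingleton.elim z default))
  refine Eq.trans (key _ _) (lintegral_congr fun s => rfl)

lemma measE {Y : Type*} [Fintype Y] {k : ℕ} (q : Y → ℝ) (y : Fin k → Y) (T : ℝ) :
    MeasurableSet {g : Y → ℝ |
      (∀ a a' : Fin k, a < a' → q (y a') + g (y a') < q (y a) + g (y a)) ∧
      (∀ a : Fin k, q (y a) + g (y a) < T) ∧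
      (∀ z : Y, (∀ a : Fin k, z ≠ y a) →
        (q z + g z < T ∧ ∀ a : Fin k, q z + g z < q (y a) + g (y a)))} := by
  have hv : ∀ u : Y, Measurable fun g : Y → ℝ => q u + g u :=
    fun u => by fun_prop
  simp only [Set.setOf_and]
  refine MeasurableSet.inter ?_ (MeasurableSet.inter ?_ ?_)
  · simp only [Set.setOf_forall]
    exact MeasurableSet.iInter fun a => MeasurableSet.iInter fun a' =>
      MeasurableSet.iInter fun _ => measurableSet_lt (hv _) (hv _)
  · simp only [Set.setOf_forall]
    exact MeasurableSet.iInter fun a => measurableSet_lt (hv _) measurable_const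
  · simp only [Set.setOf_forall]
    refine MeasurableSet.iInter fun z => MeasurableSet.iInter fun _ => ?_
    simp only [Set.setOf_and, Set.setOf_forall]
    exact (measurableSet_lt (hv _) measurable_const).inter
      (MeasurableSet.iInter fun a => measurableSet_lt (hv _) (hv _))

lemma gumbel_aux (b : ℝ) (hb : 0 < b) (k : ℕ) :
    ∀ {Y : Type*} [Fintype Y] [DecidableEq Y] (q : Y → ℝ) (y : Fin k → Y),
      Function.Injective y → ∀ T : ℝ,
      (Measure.pi fun _ : Y => gumMeasure b)
          {g : Y → ℝ |
            (∀ a a' : Fin k, a < a' → q (y a') + g (y a') < q (y a) + g (y a)) ∧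
            (∀ a : Fin k, q (y a) + g (y a) < T) ∧
            (∀ z : Y, (∀ a : Fin k, z ≠ y a) →
              (q z + g z < T ∧ ∀ a : Fin k, q z + g z < q (y a) + g (y a)))}
        = ENNReal.ofReal (∏ a : Fin k,
            Real.exp (q (y a) / b) /
              ∑ z ∈ Finset.univ.filter (fun z => ∀ j : Fin k, j < a → y j ≠ z),
                Real.exp (q z / b))
          * ENNReal.ofReal
              (Real.exp (-((∑ z : Y, Real.exp (q z / b)) * Real.exp (-(T / b))))) := by
  induction k with
  | zero =>
    intro Y _ _ q y hy T
    have hset : {g : Y → ℝ |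
        (∀ a a' : Fin 0, a < a' → q (y a') + g (y a') < q (y a) + g (y a)) ∧
        (∀ a : Fin 0, q (y a) + g (y a) < T) ∧
        (∀ z : Y, (∀ a : Fin 0, z ≠ y a) →
          (q z + g z < T ∧ ∀ a : Fin 0, q z + g z < q (y a) + g (y a)))}
        = {h : Y → ℝ | ∀ z, h z < T - q z} := by
      ext g
      simp only [Set.mem_setOf_eq]
      constructor
      · rintro ⟨-, -, h3⟩ z
        have := (h3 z (fun a => a.elim0)).1
        linarith
      · intro h
        exact ⟨fun a => a.elim0, fun a => a.elim0,
          fun z _ => ⟨by have := h z; linarith, fun a => a.elim0⟩⟩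
    rw [hset, pi_box b hb]
    have hsum : ∑ z : Y, Real.exp (-((T - q z) / b))
        = (∑ z : Y, Real.exp (q z / b)) * Real.exp (-(T / b)) := by
      rw [Finset.sum_mul]
      refine Finset.sum_congr rfl fun z _ => ?_
      rw [← Real.exp_add]
      congr 1
      field_simp
      ring
    rw [hsum]
    simp
  | succ k ih =>
    intro Y _ _ q y hy T
    -- primed data on Y' = Y \ {y 0}
    have hsuccne : ∀ a : Fin k, ¬ y a.succ = y 0 := fun a h => Fin.succ_ne_zero a (hy h)
    set q' : {z : Y // ¬ z = y 0} → ℝ := fun z => q z.1 with hq'def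
    set y' : Fin k → {z : Y // ¬ z = y 0} := fun a => ⟨y a.succ, hsuccne a⟩ with hy'def
    have hy' : Function.Injective y' := fun a a' h =>
      Fin.succ_injective k (hy (congrArg Subtype.val h))
    set w0 : ℝ := Real.exp (q (y 0) / b) with hw0def
    set W' : ℝ := ∑ z : {z : Y // ¬ z = y 0}, Real.exp (q' z / b) with hW'def
    set W : ℝ := w0 + W' with hWdef
    have hw0 : 0 < w0 := Real.exp_pos _
    have hW'0 : 0 ≤ W' := Finset.sum_nonneg fun _ _ => (Real.exp_pos _).le
    have hW : 0 < W := add_pos_of_pos_of_nonneg hw0 hW'0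
    set K : ℝ := W / w0 with hKdef
    have hK : 0 < K := div_pos hW hw0
    have hWY : W = ∑ z : Y, Real.exp (q z / b) := by
      have h1 : ∑ z ∈ Finset.univ.filter (fun z : Y => ¬ z = y 0), Real.exp (q z / b)
          = ∑ z : {z : Y // ¬ z = y 0}, Real.exp (q z.1 / b) :=
        Finset.sum_subtype _ (fun z => by simp) (fun z => Real.exp (q z / b))
      have h2 : Finset.univ.filter (fun z : Y => ¬ z = y 0) = Finset.univ.erase (y 0) := by
        ext z; simp
      rw [hWdef, hW'def, hq'def, ← h1, h2, hw0def]
      exact Finset.add_sum_erase Finset.univ (fun z => Real.exp (q z / b)) (Finset.mem_univ (y 0))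
    have hprod : (∏ a : Fin (k + 1),
          Real.exp (q (y a) / b) /
            ∑ z ∈ Finset.univ.filter (fun z => ∀ j : Fin (k + 1), j < a → y j ≠ z),
              Real.exp (q z / b))
        = (w0 / W) * ∏ a : Fin k,
            Real.exp (q' (y' a) / b) /
              ∑ z ∈ Finset.univ.filter (fun z => ∀ j : Fin k, j < a → y' j ≠ z),
                Real.exp (q' z / b) := by
      rw [Fin.prod_univ_succ]
      congr 1
      · -- the first factor
        have hfil : Finset.univ.filter (fun z : Y => ∀ j : Fin (k + 1), j < 0 → y j ≠ z)
            = Finset.univ := by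
          refine Finset.filter_true_of_mem fun z _ => fun j hj => absurd hj (by simp)
        rw [hfil, ← hWY, hw0def]
      · refine Finset.prod_congr rfl fun a _ => ?_
        congr 1
        -- denominators agree
        have hstep1 : ∑ z ∈ Finset.univ.filter (fun z => ∀ j : Fin k, j < a → y' j ≠ z),
              Real.exp (q' z / b)
            = ∑ z : {z : Y // ¬ z = y 0},
                if (∀ j : Fin k, j < a → y j.succ ≠ z.1) then Real.exp (q z.1 / b) else 0 := by
          rw [Finset.sum_filter]
          refine Finset.sum_congr rfl fun z _ => ?_
          refine if_congr ?_ rfl rfl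
          constructor
          · intro hh j hj hc; exact hh j hj (Subtype.ext hc)
          · intro hh j hj hc; exact hh j hj (congrArg Subtype.val hc)
        have hstep2 : ∑ z : {z : Y // ¬ z = y 0},
              (if (∀ j : Fin k, j < a → y j.succ ≠ z.1) then Real.exp (q z.1 / b) else 0)
            = ∑ z ∈ Finset.univ.filter (fun z : Y => ¬ z = y 0),
                (if (∀ j : Fin k, j < a → y j.succ ≠ z) then Real.exp (q z / b) else 0) :=
          (Finset.sum_subtype _ (fun z => by simp)
            (fun z => if (∀ j : Fin k, j < a → y j.succ ≠ z) then Real.exp (q z / b) else 0)).symm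
        rw [hstep1, hstep2, ← Finset.sum_filter, Finset.filter_filter]
        refine (Finset.sum_congr ?_ fun z _ => rfl).symm
        refine Finset.filter_congr fun z _ => ?_
        constructor
        · rintro ⟨h0, hsucc⟩ j hj
          refine Fin.cases (motive := fun j => j < a.succ → y j ≠ z) ?_ ?_ j hj
          · intro _ hc; exact h0 hc.symm
          · intro i hi; exact hsucc i (Fin.succ_lt_succ_iff.mp hi)
        · intro hh
          constructor
          · intro hc; exact hh 0 (Fin.succ_pos a) hc.symm
          · intro j hj; exact hh j.succ (Fin.succ_lt_succ_iff.mpr hj)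
    -- reduce the pi-integral over the singleton coordinate y 0
    rw [pi_split_single b (y 0) (measE q y T)]
    set c0 : ℝ := T - q (y 0) with hc0def
    set Cst : ℝ≥0∞ := ENNReal.ofReal (∏ a : Fin k,
        Real.exp (q' (y' a) / b) /
          ∑ z ∈ Finset.univ.filter (fun z => ∀ j : Fin k, j < a → y' j ≠ z),
            Real.exp (q' z / b)) with hCst
    have hsec : ∀ s : ℝ,
        (Measure.pi fun _ : {z : Y // ¬ z = y 0} => gumMeasure b)
          {h : {z : Y // ¬ z = y 0} → ℝ |
            (fun z => if hz : z = y 0 then s else h ⟨z, hz⟩) ∈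
              {g : Y → ℝ |
                (∀ a a' : Fin (k + 1), a < a' → q (y a') + g (y a') < q (y a) + g (y a)) ∧
                (∀ a : Fin (k + 1), q (y a) + g (y a) < T) ∧
                (∀ z : Y, (∀ a : Fin (k + 1), z ≠ y a) →
                  (q z + g z < T ∧
                    ∀ a : Fin (k + 1), q z + g z < q (y a) + g (y a)))}}
        = Set.indicator (Set.Iio c0)
            (fun t => Cst *
              ENNReal.ofReal (Real.exp (-(W' * Real.exp (-((q (y 0) + t) / b)))))) s := by
      intro s
      by_cases hs : s ∈ Set.Iio c0
      · have hTs : q (y 0) + s < T := by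
          have : s < T - q (y 0) := hs
          linarith
        rw [Set.indicator_of_mem hs]
        have hEq : {h : {z : Y // ¬ z = y 0} → ℝ |
            (fun z => if hz : z = y 0 then s else h ⟨z, hz⟩) ∈
              {g : Y → ℝ |
                (∀ a a' : Fin (k + 1), a < a' → q (y a') + g (y a') < q (y a) + g (y a)) ∧
                (∀ a : Fin (k + 1), q (y a) + g (y a) < T) ∧
                (∀ z : Y, (∀ a : Fin (k + 1), z ≠ y a) →
                  (q z + g z < T ∧
                    ∀ a : Fin (k + 1), q z + g z < q (y a) + g (y a)))}}
            = {g : {z : Y // ¬ z = y 0} → ℝ |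
                (∀ a a' : Fin k, a < a' →
                  q' (y' a') + g (y' a') < q' (y' a) + g (y' a)) ∧
                (∀ a : Fin k, q' (y' a) + g (y' a) < q (y 0) + s) ∧
                (∀ z : {z : Y // ¬ z = y 0}, (∀ a : Fin k, z ≠ y' a) →
                  (q' z + g z < q (y 0) + s ∧
                    ∀ a : Fin k, q' z + g z < q' (y' a) + g (y' a)))} := by
          ext h
          have hcs : ∀ a : Fin k,
              (if hz : y a.succ = y 0 then s else h ⟨y a.succ, hz⟩) = h (y' a) :=
            fun a => dif_neg (hsuccne a)
          have hc0 : (if hz : y 0 = y 0 then s else h ⟨y 0, hz⟩) = s := dif_pos rfl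
          have hcz : ∀ (z : Y) (hz : ¬ z = y 0),
              (if hz' : z = y 0 then s else h ⟨z, hz'⟩) = h ⟨z, hz⟩ :=
            fun z hz => dif_neg hz
          simp only [Set.mem_setOf_eq]
          constructor
          · rintro ⟨h1, h2, h3⟩
            refine ⟨?_, ?_, ?_⟩
            · intro a a' haa'
              have := h1 a.succ a'.succ (Fin.succ_lt_succ_iff.mpr haa')
              rwa [hcs, hcs] at this
            · intro a
              have := h1 0 a.succ (Fin.succ_pos a)
              rwa [hcs, hc0] at this
            · intro z' hz'
              have hzall : ∀ a : Fin (k + 1), z'.1 ≠ y a := by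
                intro a
                refine Fin.cases (motive := fun a => z'.1 ≠ y a) ?_ ?_ a
                · exact z'.2
                · intro i hci; exact hz' i (Subtype.ext hci)
              have h3' := h3 z'.1 hzall
              have hval := hcz z'.1 z'.2
              constructor
              · have := h3'.2 0
                rwa [hval, hc0] at this
              · intro a
                have := h3'.2 a.succ
                rwa [hval, hcs] at this
          · rintro ⟨h1', h2', h3'⟩
            refine ⟨?_, ?_, ?_⟩
            · intro a a' haa'
              rcases Fin.eq_zero_or_eq_succ a' with rfl | ⟨j, rfl⟩
              · exact absurd haa' (by simp)
              · rcases Fin.eq_zero_or_eq_succ a with rfl | ⟨i, rfl⟩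
                · rw [hcs, hc0]
                  exact h2' j
                · rw [hcs, hcs]
                  exact h1' i j (Fin.succ_lt_succ_iff.mp haa')
            · intro a
              rcases Fin.eq_zero_or_eq_succ a with rfl | ⟨j, rfl⟩
              · rw [hc0]; exact hTs
              · rw [hcs]; exact lt_trans (h2' j) hTs
            · intro z hz
              have hz0 : ¬ z = y 0 := hz 0
              have h3'' := h3' ⟨z, hz0⟩ (fun a hc => hz a.succ (congrArg Subtype.val hc))
              constructor
              · rw [hcz z hz0]; exact lt_trans h3''.1 hTs
              · intro a
                rcases Fin.eq_zero_or_eq_succ a with rfl | ⟨j, rfl⟩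
                · rw [hcz z hz0, hc0]; exact h3''.1
                · rw [hcz z hz0, hcs]; exact h3''.2 j
        rw [hEq, ih q' y' hy' (q (y 0) + s), hCst, hW'def]
      · rw [Set.indicator_of_notMem hs]
        have hEq : {h : {z : Y // ¬ z = y 0} → ℝ |
            (fun z => if hz : z = y 0 then s else h ⟨z, hz⟩) ∈
              {g : Y → ℝ |
                (∀ a a' : Fin (k + 1), a < a' → q (y a') + g (y a') < q (y a) + g (y a)) ∧
                (∀ a : Fin (k + 1), q (y a) + g (y a) < T) ∧
                (∀ z : Y, (∀ a : Fin (k + 1), z ≠ y a) →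
                  (q z + g z < T ∧
                    ∀ a : Fin (k + 1), q z + g z < q (y a) + g (y a)))}}
            = (∅ : Set ({z : Y // ¬ z = y 0} → ℝ)) := by
          ext h
          simp only [Set.mem_setOf_eq, Set.mem_empty_iff_false, iff_false]
          rintro ⟨-, h2, -⟩
          have := h2 0
          rw [show (if hz : y 0 = y 0 then s else h ⟨y 0, hz⟩) = s from dif_pos rfl] at this
          exact hs (show s < c0 by rw [hc0def]; linarith)
        rw [hEq, measure_empty]
    refine Eq.trans (lintegral_congr hsec) ?_
    rw [lintegral_indicator measurableSet_Iio]
    have hgcont : Continuous (gumPdf b) := by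
      unfold gumPdf
      fun_prop
    have hgp_nn : ∀ t : ℝ, 0 ≤ gumPdf b t := fun t =>
      mul_nonneg (by positivity) (Real.exp_nonneg _)
    have hgm : Measurable fun s : ℝ => ENNReal.ofReal (gumPdf b s) :=
      ENNReal.measurable_ofReal.comp hgcont.measurable
    have hΦm : Measurable fun t : ℝ =>
        Cst * ENNReal.ofReal (Real.exp (-(W' * Real.exp (-((q (y 0) + t) / b))))) := by
      refine Measurable.const_mul ?_ Cst
      exact ENNReal.measurable_ofReal.comp (by fun_prop)
    rw [show gumMeasure b = volume.withDensity (fun z => ENNReal.ofReal (gumPdf b z)) from rfl,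
      setLIntegral_withDensity_eq_setLIntegral_mul volume hgm hΦm measurableSet_Iio]
    have hpoint : ∀ t : ℝ,
        ((fun z => ENNReal.ofReal (gumPdf b z)) * fun t =>
            Cst * ENNReal.ofReal (Real.exp (-(W' * Real.exp (-((q (y 0) + t) / b)))))) t
          = (Cst * ENNReal.ofReal (w0 / W)) *
              ENNReal.ofReal (K / b *
                (Real.exp (-(t / b)) * Real.exp (-(K * Real.exp (-(t / b)))))) := by
      intro t
      simp only [Pi.mul_apply]
      rw [← mul_assoc, mul_comm (ENNReal.ofReal (gumPdf b t)) Cst, mul_assoc, mul_assoc]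
      congr 1
      rw [← ENNReal.ofReal_mul (hgp_nn t),
        ← ENNReal.ofReal_mul (le_of_lt (div_pos hw0 hW))]
      congr 1
      have e1 : Real.exp (-((q (y 0) + t) / b)) = Real.exp (-(t / b)) / w0 := by
        rw [hw0def, eq_div_iff (Real.exp_pos _).ne', ← Real.exp_add]
        congr 1
        field_simp
        ring
      have e2 : -(K * Real.exp (-(t / b)))
          = -(Real.exp (-(t / b))) + -(W' * (Real.exp (-(t / b)) / w0)) := by
        rw [hKdef, hWdef]
        field_simp
        ring
      have e0 : gumPdf b t
          = 1 / b * (Real.exp (-(t / b)) * Real.exp (-(Real.exp (-(t / b))))) := by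
        rw [gumPdf, neg_add, Real.exp_add]
      rw [e0, e1, e2, Real.exp_add, hKdef]
      field_simp
    rw [lintegral_congr hpoint, lintegral_const_mul _ (by fun_prop), keyInt b K c0 hb hK]
    have e3 : K * Real.exp (-(c0 / b)) = (∑ z : Y, Real.exp (q z / b)) * Real.exp (-(T / b)) := by
      rw [← hWY, hc0def, hKdef]
      have e4 : Real.exp (-((T - q (y 0)) / b)) = w0 * Real.exp (-(T / b)) := by
        rw [hw0def, ← Real.exp_add]
        congr 1
        field_simp
        ring
      rw [e4]
      field_simp
    rw [e3, hprod, ENNReal.ofReal_mul (le_of_lt (div_pos hw0 hW)), hCst]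
    ring

/-- Adding independent `Gum(b)` noise to each value `q(y)` and reporting the
ordered sequence of the `k` outcomes with the largest noisy values has the same distribution
over ordered `k`-tuples as iteratively peeling with the Exponential Mechanism: the
probability of observing the (injective) ordered tuple `y₁, …, y_k` is
`∏_{a} exp(q(y_a)/b) / ∑_{z ∉ {y₁,…,y_{a−1}}} exp(q(z)/b)`. -/
theorem gumbel_topk_eq_peeling_exponential_mechanism {Y : Type*} [Fintype Y] [DecidableEq Y]
    (q : Y → ℝ) (b : ℝ) (hb : 0 < b) (k : ℕ) (y : Fin k → Y) (hy : Function.Injective y) :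
    (Measure.pi fun _ : Y => gumMeasure b)
        {g : Y → ℝ |
          (∀ a a' : Fin k, a < a' → q (y a') + g (y a') < q (y a) + g (y a)) ∧
          (∀ z : Y, (∀ a : Fin k, z ≠ y a) → ∀ a : Fin k, q z + g z < q (y a) + g (y a))}
      = ENNReal.ofReal (∏ a : Fin k,
          Real.exp (q (y a) / b) /
            ∑ z ∈ Finset.univ.filter (fun z => ∀ j : Fin k, j < a → y j ≠ z),
              Real.exp (q z / b)) := by
  set E : ℕ → Set (Y → ℝ) := fun n =>
    {g : Y → ℝ |
      (∀ a a' : Fin k, a < a' → q (y a') + g (y a') < q (y a) + g (y a)) ∧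
      (∀ a : Fin k, q (y a) + g (y a) < (n : ℝ)) ∧
      (∀ z : Y, (∀ a : Fin k, z ≠ y a) →
        (q z + g z < (n : ℝ) ∧ ∀ a : Fin k, q z + g z < q (y a) + g (y a)))} with hE
  have hmono : Monotone E := by
    intro m n hmn g hg
    obtain ⟨h1, h2, h3⟩ := hg
    have hcast : (m : ℝ) ≤ (n : ℝ) := Nat.cast_le.mpr hmn
    exact ⟨h1, fun a => lt_of_lt_of_le (h2 a) hcast,
      fun z hz => ⟨lt_of_lt_of_le ((h3 z hz).1) hcast, (h3 z hz).2⟩⟩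
  have hunion : {g : Y → ℝ |
      (∀ a a' : Fin k, a < a' → q (y a') + g (y a') < q (y a) + g (y a)) ∧
      (∀ z : Y, (∀ a : Fin k, z ≠ y a) → ∀ a : Fin k, q z + g z < q (y a) + g (y a))}
      = ⋃ n : ℕ, E n := by
    ext g
    constructor
    · rintro ⟨h1, h2⟩
      obtain ⟨M, hM⟩ : ∃ M : ℝ, ∀ z : Y, q z + g z ≤ M := Finite.exists_le _
      obtain ⟨n, hn⟩ := exists_nat_gt M
      exact Set.mem_iUnion.mpr ⟨n, h1, fun a => lt_of_le_of_lt (hM _) hn,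
        fun z hz => ⟨lt_of_le_of_lt (hM z) hn, h2 z hz⟩⟩
    · intro hg
      obtain ⟨n, h1, _, h3⟩ := Set.mem_iUnion.mp hg
      exact ⟨h1, fun z hz => (h3 z hz).2⟩
  rw [hunion]
  have htend := tendsto_measure_iUnion_atTop
    (μ := Measure.pi fun _ : Y => gumMeasure b) hmono
  have hval : ∀ n : ℕ, (Measure.pi fun _ : Y => gumMeasure b) (E n)
      = ENNReal.ofReal (∏ a : Fin k,
          Real.exp (q (y a) / b) /
            ∑ z ∈ Finset.univ.filter (fun z => ∀ j : Fin k, j < a → y j ≠ z),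
              Real.exp (q z / b))
        * ENNReal.ofReal
            (Real.exp (-((∑ z : Y, Real.exp (q z / b)) * Real.exp (-((n : ℝ) / b))))) :=
    fun n => gumbel_aux b hb k q y hy (n : ℝ)
  have t1 : Filter.Tendsto (fun n : ℕ => -((n : ℝ) / b)) Filter.atTop Filter.atBot :=
    tendsto_neg_atTop_atBot.comp ((tendsto_natCast_atTop_atTop).atTop_div_const hb)
  have t2 : Filter.Tendsto (fun n : ℕ => Real.exp (-((n : ℝ) / b))) Filter.atTop (nhds 0) :=
    Real.tendsto_exp_atBot.comp t1
  have t3 : Filter.Tendsto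
      (fun n : ℕ => -((∑ z : Y, Real.exp (q z / b)) * Real.exp (-((n : ℝ) / b))))
      Filter.atTop (nhds 0) := by
    have := (t2.const_mul (∑ z : Y, Real.exp (q z / b))).neg
    simpa using this
  have t4 : Filter.Tendsto
      (fun n : ℕ => Real.exp (-((∑ z : Y, Real.exp (q z / b)) * Real.exp (-((n : ℝ) / b)))))
      Filter.atTop (nhds 1) := by
    have := (Real.continuous_exp.tendsto 0).comp t3
    simpa [Function.comp_def] using this
  have t5 := ENNReal.tendsto_ofReal t4
  have t6 : Filter.Tendsto (fun n : ℕ =>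
      ENNReal.ofReal (∏ a : Fin k,
          Real.exp (q (y a) / b) /
            ∑ z ∈ Finset.univ.filter (fun z => ∀ j : Fin k, j < a → y j ≠ z),
              Real.exp (q z / b))
        * ENNReal.ofReal
            (Real.exp (-((∑ z : Y, Real.exp (q z / b)) * Real.exp (-((n : ℝ) / b))))))
      Filter.atTop
      (nhds (ENNReal.ofReal (∏ a : Fin k,
          Real.exp (q (y a) / b) /
            ∑ z ∈ Finset.univ.filter (fun z => ∀ j : Fin k, j < a → y j ≠ z),
              Real.exp (q z / b)) * ENNReal.ofReal 1)) :=
    ENNReal.Tendsto.const_mul t5 (Or.inr ENNReal.ofReal_ne_top)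
  have htend' : Filter.Tendsto (fun n : ℕ => (Measure.pi fun _ : Y => gumMeasure b) (E n))
      Filter.atTop (nhds ((Measure.pi fun _ : Y => gumMeasure b) (⋃ n : ℕ, E n))) := htend
  rw [funext hval] at htend'
  have := tendsto_nhds_unique htend' t6
  rw [this, ENNReal.ofReal_one, mul_one]
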